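/- If (y₁, p₁, r₁) is a solution of R = R_W(y,p,r) with cos(y₁) ≠ 0, then (y₂, p₂, r₂) with y₂ = π − y₁ (or −π − y₁ if y₁ < 0), p₂ = p₁ − π (or p₁ + π if p₁ < 0), and r₂ = r₁ − π (or r₁ + π if r₁ < 0), is also a solution: R_W(y₂, p₂, r₂) = R_W(y₁, p₁, r₁). -/
import Mathlib

open Real Matrix

noncomputable def RXl (p : ℝ) : Matrix (Fin 3) (Fin 3) ℝ :=
  !![1, 0, 0; 0, Real.cos p, Real.sin p; 0, -Real.sin p, Real.cos p]

noncomputable def RYl (y : ℝ) : Matrix (Fin 3) (Fin 3) ℝ :=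
  !![Real.cos y, 0, -Real.sin y; 0, 1, 0; Real.sin y, 0, Real.cos y]

noncomputable def RZl (r : ℝ) : Matrix (Fin 3) (Fin 3) ℝ :=
  !![Real.cos r, Real.sin r, 0; -Real.sin r, Real.cos r, 0; 0, 0, 1]

/-- The 300W-LP rotation matrix. -/
noncomputable def RW (y p r : ℝ) : Matrix (Fin 3) (Fin 3) ℝ := RXl p * RYl y * RZl r

lemma RW_key (y p r y' p' r' : ℝ)
    (h1 : Real.cos y' = -Real.cos y) (h2 : Real.sin y' = Real.sin y)
    (h3 : Real.cos p' = -Real.cos p) (h4 : Real.sin p' = -Real.sin p)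
    (h5 : Real.cos r' = -Real.cos r) (h6 : Real.sin r' = -Real.sin r) :
    RW y' p' r' = RW y p r := by
  unfold RW RXl RYl RZl
  rw [h1, h2, h3, h4, h5, h6]
  ext i j
  fin_cases i <;> fin_cases j <;>
    simp [Matrix.mul_apply, Fin.sum_univ_succ] <;> ring

theorem stmt_6 (y₁ p₁ r₁ : ℝ) (hy : Real.cos y₁ ≠ 0) :
    RW (if y₁ < 0 then -Real.pi - y₁ else Real.pi - y₁)
       (if p₁ < 0 then p₁ + Real.pi else p₁ - Real.pi)
       (if r₁ < 0 then r₁ + Real.pi else r₁ - Real.pi) = RW y₁ p₁ r₁ := by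
  apply RW_key <;> split_ifs <;>
    simp [Real.cos_sub, Real.sin_sub, Real.cos_add, Real.sin_add,
      Real.cos_pi, Real.sin_pi, sub_eq_add_neg]
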